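/- For every countable ordinal α and every finite set S of positive integers with min S ≥ 2, there exists m ∈ ℕ such that S ∈ S_{α+m}. -/

import Mathlib

/-- A Schreier system: a transfinite hierarchy of families of finite subsets of
`{1, 2, 3, ...}` following the recursive definition of the Schreier families `S_α`,
with a fixed choice of approximating sequence at each countable limit ordinal. -/
structure SchreierSystem where
  S : Ordinal → Set (Finset ℕ)
  zero : S 0 = {E : Finset ℕ | E.card ≤ 1 ∧ ∀ a ∈ E, 1 ≤ a}
  succ : ∀ α : Ordinal, S (α + 1) = {E : Finset ℕ |
      ∃ (m : ℕ) (Es : Fin m → Finset ℕ),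
        (∀ i, Es i ∈ S α) ∧
        (∀ i j : Fin m, i < j → ∀ a ∈ Es i, ∀ b ∈ Es j, a < b) ∧
        (∀ i, ∀ a ∈ Es i, m ≤ a) ∧
        E = Finset.univ.biUnion Es}
  limit : ∀ α : Ordinal, Order.IsSuccLimit α → α.card ≤ Cardinal.aleph0 →
      ∃ f : ℕ → Ordinal,
        (∀ m, f m + 1 < α) ∧
        (∀ β < α, ∃ m, β ≤ f m + 1) ∧
        (∀ m, S (f m) ⊆ S (f (m + 1))) ∧
        S α = {E : Finset ℕ | ∃ m : ℕ, 1 ≤ m ∧ (∀ a ∈ E, m ≤ a) ∧ E ∈ S (f m + 1)}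

lemma schreier_mem_succ (𝒮 : SchreierSystem) (α : Ordinal) (E : Finset ℕ)
    (hE : E ∈ 𝒮.S α) (hpos : ∀ a ∈ E, 1 ≤ a) : E ∈ 𝒮.S (α + 1) := by
  rw [𝒮.succ]
  rcases eq_or_ne E ∅ with rfl | hne
  · exact ⟨0, fun i => i.elim0, fun i => i.elim0, fun i => i.elim0, fun i => i.elim0, by simp⟩
  · refine ⟨1, fun _ => E, fun _ => hE, ?_, fun _ a ha => hpos a ha, by simp⟩
    intro i j hij
    exact absurd (Subsingleton.elim i j) (ne_of_lt hij)

lemma schreier_empty_mem (𝒮 : SchreierSystem) :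
    ∀ α : Ordinal, α.card ≤ Cardinal.aleph0 → (∅ : Finset ℕ) ∈ 𝒮.S α := by
  intro α
  induction α using Ordinal.induction with
  | h α IH =>
  intro hα
  rcases Ordinal.zero_or_succ_or_isSuccLimit α with rfl | ⟨β, rfl⟩ | hlim
  · rw [𝒮.zero]; simp
  · rw [← Ordinal.add_one_eq_succ, 𝒮.succ]
    exact ⟨0, fun i => i.elim0, fun i => i.elim0, fun i => i.elim0, fun i => i.elim0, by simp⟩
  · obtain ⟨f, hf1, _, _, hS⟩ := 𝒮.limit α hlim hα
    rw [hS]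
    exact ⟨1, le_refl _, by simp,
      IH _ (hf1 1) ((Ordinal.card_le_card (hf1 1).le).trans hα)⟩

lemma schreier_singleton_mem (𝒮 : SchreierSystem) :
    ∀ α : Ordinal, α.card ≤ Cardinal.aleph0 → ∀ a : ℕ, 2 ≤ a →
      ({a} : Finset ℕ) ∈ 𝒮.S α := by
  intro α
  induction α using Ordinal.induction with
  | h α IH =>
  intro hα a ha
  rcases Ordinal.zero_or_succ_or_isSuccLimit α with rfl | ⟨β, rfl⟩ | hlim
  · rw [𝒮.zero]; constructor <;> simp <;> omega
  · rw [← Ordinal.add_one_eq_succ]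
    have hβ : β.card ≤ Cardinal.aleph0 :=
      (Ordinal.card_le_card (Order.lt_succ β).le).trans hα
    exact schreier_mem_succ 𝒮 β _ (IH β (by rw [← Ordinal.add_one_eq_succ]; exact Order.lt_succ β) hβ a ha)
      (by simp; omega)
  · obtain ⟨f, hf1, _, _, hS⟩ := 𝒮.limit α hlim hα
    rw [hS]
    exact ⟨2, by norm_num, by simp [ha],
      IH _ (hf1 2) ((Ordinal.card_le_card (hf1 2).le).trans hα) a ha⟩

/-- For every countable ordinal `α` and every finite set `S` of positive integers
with `min S ≥ 2`, there exists `m ∈ ℕ` such that `S ∈ S_{α+m}`. -/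
theorem stmt19 (𝒮 : SchreierSystem) (α : Ordinal) (hα : α.card ≤ Cardinal.aleph0)
    (S : Finset ℕ) (hS : ∀ a ∈ S, 2 ≤ a) :
    ∃ m : ℕ, S ∈ 𝒮.S (α + m) := by
  have hcount : ∀ n : ℕ, (α + (n : Ordinal)).card ≤ Cardinal.aleph0 := by
    intro n
    rw [Ordinal.card_add, Ordinal.card_nat]
    exact Cardinal.add_le_aleph0.mpr ⟨hα, le_of_lt (Cardinal.nat_lt_aleph0 n)⟩
  suffices h : ∀ n (T : Finset ℕ), T.card = n + 1 → (∀ a ∈ T, 2 ≤ a) →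
      T ∈ 𝒮.S (α + n) by
    rcases eq_or_ne S ∅ with rfl | hne
    · exact ⟨0, by simpa using schreier_empty_mem 𝒮 α hα⟩
    · have hc : S.card ≠ 0 := by simpa [Finset.card_eq_zero] using hne
      exact ⟨S.card - 1, h (S.card - 1) S (by omega) hS⟩
  intro n
  induction n with
  | zero =>
    intro T hT h2
    rw [Finset.card_eq_one] at hT
    obtain ⟨a, rfl⟩ := hT
    simpa using schreier_singleton_mem 𝒮 α hα a (h2 a (by simp))
  | succ n IH =>
    intro T hT h2
    have hne : T.Nonempty := by rw [← Finset.card_pos]; omega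
    set b := T.min' hne with hb
    have hbT : b ∈ T := T.min'_mem hne
    set R := T.erase b with hRdef
    have hR : R.card = n + 1 := by rw [Finset.card_erase_of_mem hbT]; omega
    have hRmem : R ∈ 𝒮.S (α + n) :=
      IH R hR (fun a ha => h2 a (Finset.mem_of_mem_erase ha))
    have hbmem : ({b} : Finset ℕ) ∈ 𝒮.S (α + n) :=
      schreier_singleton_mem 𝒮 _ (hcount n) b (h2 b hbT)
    have hcast : (α + ((n + 1 : ℕ) : Ordinal)) = (α + n) + 1 := by
      push_cast; rw [add_assoc]
    rw [hcast, 𝒮.succ]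
    refine ⟨2, fun i => if i.val = 0 then {b} else R, ?_, ?_, ?_, ?_⟩
    · intro i
      by_cases h : i.val = 0 <;> simp only [h, if_true, if_false, reduceIte] <;>
        first | exact hbmem | exact hRmem
    · intro i j hij x hx y hy
      rw [Fin.lt_def] at hij
      have hj2 := j.isLt
      dsimp only at hx hy
      rw [if_pos (by omega : i.val = 0), Finset.mem_singleton] at hx
      rw [if_neg (by omega : ¬ j.val = 0)] at hy
      subst hx
      exact lt_of_le_of_ne (T.min'_le y (Finset.mem_of_mem_erase hy))
        (Ne.symm (Finset.ne_of_mem_erase hy))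
    · intro i x hx
      dsimp only at hx
      by_cases h : i.val = 0
      · rw [if_pos h, Finset.mem_singleton] at hx; subst hx; exact h2 b hbT
      · rw [if_neg h] at hx; exact h2 x (Finset.mem_of_mem_erase hx)
    · ext x
      rw [Finset.mem_biUnion]
      constructor
      · intro hxT
        by_cases hxb : x = b
        · exact ⟨0, Finset.mem_univ _, by simp [hxb]⟩
        · refine ⟨1, Finset.mem_univ _, ?_⟩
          show x ∈ (if ((1 : Fin 2) : ℕ) = 0 then ({b} : Finset ℕ) else R)
          rw [if_neg (by decide : ¬((1 : Fin 2) : ℕ) = 0)]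
          exact Finset.mem_erase.mpr ⟨hxb, hxT⟩
      · rintro ⟨i, -, hxi⟩
        by_cases h : i.val = 0
        · rw [if_pos h, Finset.mem_singleton] at hxi; subst hxi; exact hbT
        · rw [if_neg h] at hxi; exact Finset.mem_of_mem_erase hxi
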